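/- arXiv:2309.10203 — 3 statements merged into one kernel-verified Lean document; each statement's English description precedes it below -/
import Mathlib

section
/- For any linear order ≺ on the set of indecomposable permutations, call a permutation π a Lyndon permutation with respect to ≺ if the word of its indecomposable blocks is a Lyndon word over the alphabet of indecomposable permutations ordered by ≺. Then for every k, the number of Lyndon permutations with respect to ≺ of size at least 2 and at most k is the same for all choices of the linear order ≺. -/
open Equiv MeasureTheory

/-- A permutation of size `n` together with its size. -/
abbrev PermSig := Σ n : ℕ, Equiv.Perm (Fin n)

/-- The direct sum of two permutations. -/
def permDirectSum {m n : ℕ} (π₁ : Equiv.Perm (Fin m)) (π₂ : Equiv.Perm (Fin n)) :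
    Equiv.Perm (Fin (m + n)) :=
  Equiv.permCongr finSumFinEquiv (Equiv.sumCongr π₁ π₂)

def sigSum (p q : PermSig) : PermSig := ⟨p.1 + q.1, permDirectSum p.2 q.2⟩

/-- Direct sum of a list of permutations. -/
def sigSumList : List PermSig → PermSig
  | [] => ⟨0, 1⟩
  | [p] => p
  | p :: q :: l => sigSum p (sigSumList (q :: l))

/-- A permutation is decomposable if it is a direct sum of two permutations
(each of size at least `1`). -/
def IsDecomposable {n : ℕ} (π : Equiv.Perm (Fin n)) : Prop :=
  ∃ (a b : ℕ) (_ : 0 < a) (_ : 0 < b) (h : a + b = n)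
    (π₁ : Equiv.Perm (Fin a)) (π₂ : Equiv.Perm (Fin b)),
    π = Equiv.permCongr (finCongr h) (permDirectSum π₁ π₂)

def IsIndecomposable {n : ℕ} (π : Equiv.Perm (Fin n)) : Prop :=
  1 ≤ n ∧ ¬ IsDecomposable π

/-- The alphabet `Σ` of indecomposable permutations. -/
def Indec : Type := {p : PermSig // IsIndecomposable p.2}

/-- `l` is the word of indecomposable blocks of `π`. -/
def IsBlockDecomposition {n : ℕ} (π : Equiv.Perm (Fin n)) (l : List Indec) : Prop :=
  sigSumList (l.map Subtype.val) = ⟨n, π⟩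

/-- The sequence of values of a permutation. -/
def permWord {n : ℕ} (π : Equiv.Perm (Fin n)) : List ℕ :=
  (List.finRange n).map fun i => (π i : ℕ)

/-- The order on the alphabet of indecomposable permutations: smaller sizes first,
permutations of the same size ordered lexicographically as sequences of values. -/
def sigLt (p q : PermSig) : Prop :=
  p.1 < q.1 ∨ (p.1 = q.1 ∧ List.Lex (· < ·) (permWord p.2) (permWord q.2))

def indecLt (p q : Indec) : Prop := sigLt p.1 q.1

/-- A nonempty word is Lyndon if no proper nonempty suffix of it is smaller
(w.r.t. the lexicographic order induced by `r`) than the word itself. -/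
def IsLyndonWord {α : Type*} (r : α → α → Prop) (w : List α) : Prop :=
  w ≠ [] ∧ ∀ i, 0 < i → i < w.length → ¬ List.Lex r (w.drop i) w

/-- A permutation is Lyndon w.r.t. an order `r` on indecomposable permutations
if its word of indecomposable blocks is a Lyndon word. -/
def IsLyndonPermWrt (r : Indec → Indec → Prop) {n : ℕ} (π : Equiv.Perm (Fin n)) : Prop :=
  ∃ l : List Indec, IsBlockDecomposition π l ∧ IsLyndonWord r l

def IsLyndonPerm {n : ℕ} (π : Equiv.Perm (Fin n)) : Prop := IsLyndonPermWrt indecLt π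

/-- `π <_L π'`: the word of blocks of `π` is lexicographically smaller than that of `π'`. -/
def permLtL (p q : PermSig) : Prop :=
  ∃ lp lq : List Indec, IsBlockDecomposition p.2 lp ∧ IsBlockDecomposition q.2 lq ∧
    List.Lex indecLt lp lq

def permLeL (p q : PermSig) : Prop :=
  ∃ lp lq : List Indec, IsBlockDecomposition p.2 lp ∧ IsBlockDecomposition q.2 lq ∧
    (lp = lq ∨ List.Lex indecLt lp lq)

/-- The pattern induced by the set `S` in `σ` is `τ`. -/
def IsPatternOf {N m : ℕ} (σ : Equiv.Perm (Fin N)) (S : Finset (Fin N))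
    (τ : Equiv.Perm (Fin m)) : Prop :=
  ∃ h : S.card = m, ∀ i j : Fin m,
    τ i < τ j ↔ σ (S.orderEmbOfFin h i) < σ (S.orderEmbOfFin h j)

/-- A permuton is a Borel probability measure on `[0,1]²` with uniform marginals. -/
structure Permuton where
  μ : Measure (ℝ × ℝ)
  prob : IsProbabilityMeasure μ
  marg_fst : ∀ a b : ℝ, 0 ≤ a → a ≤ b → b ≤ 1 →
    μ (Set.Icc a b ×ˢ Set.Icc (0:ℝ) 1) = ENNReal.ofReal (b - a)
  marg_snd : ∀ a b : ℝ, 0 ≤ a → a ≤ b → b ≤ 1 →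
    μ (Set.Icc (0:ℝ) 1 ×ˢ Set.Icc a b) = ENNReal.ofReal (b - a)

/-- The density of a pattern `σ` in a permuton `P`: the probability that `n` points
sampled independently from `P`, sorted by their first coordinates, have their second
coordinates ordered according to `σ`. -/
noncomputable def permutonDensity {n : ℕ} (σ : Equiv.Perm (Fin n)) (P : Permuton) : ℝ :=
  haveI := P.prob
  ((Measure.pi fun _ : Fin n => P.μ)
    {p : Fin n → ℝ × ℝ | ∃ e : Equiv.Perm (Fin n),
      (∀ i j : Fin n, i < j → (p (e i)).1 < (p (e j)).1) ∧
      (∀ i j : Fin n, σ i < σ j ↔ (p (e i)).2 < (p (e j)).2)}).toReal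

section LexBasics
variable {α : Type*} {r : α → α → Prop}

lemma lex_append_mono {a b : List α} : ∀ {t p : List α}, List.Lex r t p → p.length ≤ t.length →
    List.Lex r (t ++ a) (p ++ b) := by
  intro t p h
  induction h with
  | nil => intro h; simp at h
  | @cons x t' p' h ih => intro hlen; exact List.Lex.cons (ih (by simpa using hlen))
  | rel h => intro _; exact List.Lex.rel h

lemma lex_prefix_or {s w : List α} (h : List.Lex r s w) :
    s <+: w ∨ ∀ p, List.Lex r (s ++ p) w := by
  induction h with
  | nil => exact Or.inl (List.nil_prefix)
  | @cons x s' w' h ih =>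
    rcases ih with h1 | h2
    · obtain ⟨t, rfl⟩ := h1
      exact Or.inl ⟨t, rfl⟩
    · exact Or.inr fun p => List.Lex.cons (h2 p)
  | rel h => exact Or.inr fun p => List.Lex.rel h

lemma lex_of_append_left [IsIrrefl α r] : ∀ (a : List α) {b c : List α},
    List.Lex r (a ++ b) (a ++ c) → List.Lex r b c
  | [], _, _, h => h
  | x :: a, b, c, h => lex_of_append_left a (List.lex_cons_iff.mp h)

end LexBasics

section Lyndon
variable {α : Type*} {r : α → α → Prop} [IsStrictTotalOrder α r]

instance myAsymm : IsAsymm α r := ⟨fun a b h1 h2 => (irrefl_of r a) (trans_of r h1 h2)⟩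

lemma lyndon_iff_min_rotate {w : List α} :
    IsLyndonWord r w ↔ w ≠ [] ∧ ∀ i, 0 < i → i < w.length → List.Lex r w (w.rotate i) := by
  constructor
  · rintro ⟨hne, h⟩
    refine ⟨hne, fun i hi0 hin => ?_⟩
    rw [List.rotate_eq_drop_append_take hin.le]
    have hlen : (w.drop i).length ≤ w.length := by simp
    have hne' : w ≠ w.drop i := by
      intro he
      have := congrArg List.length he
      simp at this
      omega
    have hlex : List.Lex r w (w.drop i) := by
      rcases trichotomous_of (List.Lex r) w (w.drop i) with h1 | h1 | h1
      · exact h1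
      · exact absurd h1 hne'
      · exact absurd h1 (h i hi0 hin)
    have := lex_append_mono (a := ([] : List α)) (b := w.take i) hlex hlen
    simpa using this
  · rintro ⟨hne, h⟩
    refine ⟨hne, fun i hi0 hin hlex => ?_⟩
    rcases lex_prefix_or hlex with hpre | hall
    · obtain ⟨t, hst⟩ := hpre
      have hlens : (w.drop i).length = w.length - i := by simp
      have hlent : t.length = i := by
        have := congrArg List.length hst
        simp at this
        omega
      have hmin1 : List.Lex r (w.drop i ++ t) (w.drop i ++ w.take i) := by
        rw [hst]
        have := h i hi0 hin
        rwa [List.rotate_eq_drop_append_take hin.le] at this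
      have h1 : List.Lex r t (w.take i) := lex_of_append_left _ hmin1
      have hmin2 := h (w.length - i) (by omega) (by omega)
      rw [List.rotate_eq_drop_append_take (by omega : w.length - i ≤ w.length)] at hmin2
      have hd : w.drop (w.length - i) = t := by
        have h0 := List.drop_left (l₁ := w.drop i) (l₂ := t)
        rw [hst, hlens] at h0
        exact h0
      have ht : w.take (w.length - i) = w.drop i := by
        have h0 := List.take_left (l₁ := w.drop i) (l₂ := t)
        rw [hst, hlens] at h0
        exact h0
      rw [hd, ht] at hmin2
      -- hmin2 : Lex w (t ++ drop i w)
      have h2 : List.Lex r (t ++ w.drop i) (w.take i ++ w.drop i) :=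
        lex_append_mono h1 (by rw [List.length_take, hlent]; omega)
      rw [List.take_append_drop] at h2
      exact asymm_of (List.Lex r) hmin2 h2
    · have := hall (w.take i)
      have hrot := h i hi0 hin
      rw [List.rotate_eq_drop_append_take hin.le] at hrot
      exact asymm_of (List.Lex r) hrot this

lemma lyndon_prim {w : List α} (hw : IsLyndonWord r w) :
    ∀ i, 0 < i → i < w.length → w.rotate i ≠ w := by
  intro i hi0 hin he
  have := (lyndon_iff_min_rotate.mp hw).2 i hi0 hin
  rw [he] at this
  exact irrefl_of (List.Lex r) w this

lemma prim_mod_eq_zero {w : List α} (hne : w ≠ [])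
    (hprim : ∀ i, 0 < i → i < w.length → w.rotate i ≠ w)
    {i : ℕ} (h : w.rotate i = w) : i % w.length = 0 := by
  by_contra hj
  have hlen : 0 < w.length := List.length_pos_iff.mpr hne
  have h1 : w.rotate (i % w.length) = w := by rw [List.rotate_mod]; exact h
  exact hprim _ (Nat.pos_of_ne_zero hj) (Nat.mod_lt _ hlen) h1

lemma prim_rotate_inj {w : List α} (hne : w ≠ [])
    (hprim : ∀ i, 0 < i → i < w.length → w.rotate i ≠ w)
    {a b : ℕ} (ha : a < w.length) (hb : b < w.length) (h : w.rotate a = w.rotate b) : a = b := by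
  have hlen : 0 < w.length := List.length_pos_iff.mpr hne
  wlog hab : a ≤ b generalizing a b
  · exact (this hb ha h.symm (by omega)).symm
  have h1 : w.rotate (b + (w.length - a)) = w := by
    have : (w.rotate a).rotate (w.length - a) = (w.rotate b).rotate (w.length - a) := by rw [h]
    rw [List.rotate_rotate, List.rotate_rotate] at this
    have ha' : a + (w.length - a) = w.length := by omega
    rw [ha', List.rotate_length] at this
    exact this.symm
  have := prim_mod_eq_zero hne hprim h1
  have he : b + (w.length - a) = w.length + (b - a) := by omega
  rw [he, Nat.add_mod_left, Nat.mod_eq_of_lt (by omega)] at this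
  omega

lemma prim_rotate {w : List α} (hne : w ≠ [])
    (hprim : ∀ i, 0 < i → i < w.length → w.rotate i ≠ w) (j : ℕ) :
    ∀ i, 0 < i → i < (w.rotate j).length → (w.rotate j).rotate i ≠ w.rotate j := by
  intro i hi0 hin he
  rw [List.length_rotate] at hin
  rw [List.rotate_rotate] at he
  have hlen : 0 < w.length := List.length_pos_iff.mpr hne
  have h1 : w.rotate ((j + i) % w.length) = w.rotate (j % w.length) := by
    rw [List.rotate_mod, List.rotate_mod]; exact he
  have h2 := prim_rotate_inj hne hprim (Nat.mod_lt _ hlen) (Nat.mod_lt _ hlen) h1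
  have h3 : i % w.length = 0 := by
    have : (j + i) % w.length = (j + 0) % w.length := by simpa using h2
    have := (Nat.ModEq.add_left_cancel' j (this : Nat.ModEq _ _ _))
    simpa [Nat.ModEq, Nat.mod_eq_of_lt hin] using this
  rw [Nat.mod_eq_of_lt hin] at h3
  omega

/-- minimum of a nonempty list w.r.t. a strict total order -/
lemma exists_list_min {β : Type*} (s : β → β → Prop) [IsStrictTotalOrder β s] :
    ∀ (l : List β), l ≠ [] → ∃ m ∈ l, ∀ x ∈ l, x ≠ m → s m x := by
  intro l
  induction l with
  | nil => intro h; exact absurd rfl h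
  | cons a l ih =>
    intro _
    rcases eq_or_ne l [] with rfl | hl
    · exact ⟨a, by simp, by simp⟩
    · obtain ⟨m, hm, hmin⟩ := ih hl
      rcases trichotomous_of s a m with h1 | h1 | h1
      · refine ⟨a, by simp, fun x hx hxa => ?_⟩
        rcases List.mem_cons.mp hx with rfl | hx
        · exact absurd rfl hxa
        · rcases eq_or_ne x m with rfl | hxm
          · exact h1
          · exact trans_of s h1 (hmin x hx hxm)
      · subst h1
        exact ⟨a, by simp, fun x hx hxa => hmin x (by
          rcases List.mem_cons.mp hx with rfl | hx
          · exact absurd rfl hxa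
          · exact hx) hxa⟩
      · refine ⟨m, by simp [hm], fun x hx hxm => ?_⟩
        rcases List.mem_cons.mp hx with rfl | hx
        · exact h1
        · exact hmin x hx hxm

variable {r' : α → α → Prop} [IsStrictTotalOrder α r']

lemma lyndon_rotation_unique {u v : List α} (hu : IsLyndonWord r' u) (hv : IsLyndonWord r' v)
    (h : u.IsRotated v) : u = v := by
  by_contra hne
  obtain ⟨m', hm'⟩ := h.symm
  obtain ⟨m, hm⟩ := h
  have hlen : 0 < u.length := List.length_pos_iff.mpr hu.1
  have hlen' : v.length = u.length := by rw [← hm, List.length_rotate]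
  have hmu : m % u.length ≠ 0 := by
    intro h0
    apply hne
    rw [← hm, ← List.rotate_mod, h0, List.rotate_zero]
  have hmv : m' % v.length ≠ 0 := by
    intro h0
    apply hne
    rw [← hm', ← List.rotate_mod, h0, List.rotate_zero]
  have h1 : List.Lex r' u v := by
    have := (lyndon_iff_min_rotate.mp hu).2 (m % u.length) (Nat.pos_of_ne_zero hmu)
      (Nat.mod_lt _ hlen)
    rw [List.rotate_mod, hm] at this
    exact this
  have h2 : List.Lex r' v u := by
    have := (lyndon_iff_min_rotate.mp hv).2 (m' % v.length) (Nat.pos_of_ne_zero hmv)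
      (Nat.mod_lt _ (by omega))
    rw [List.rotate_mod, hm'] at this
    exact this
  exact asymm_of (List.Lex r') h1 h2

theorem exists_unique_lyndon_rotation {w : List α} (hw : IsLyndonWord r w) :
    ∃! u, w.IsRotated u ∧ IsLyndonWord r' u := by
  have hne := hw.1
  have hlen : 0 < w.length := List.length_pos_iff.mpr hne
  have hprim := lyndon_prim hw
  -- pick minimum rotation w.r.t. Lex r'
  have hR : ((List.range w.length).map (w.rotate ·)) ≠ [] := by
    intro h0
    have h1 : List.range w.length = [] := List.map_eq_nil_iff.mp h0
    rw [List.range_eq_nil] at h1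
    omega
  haveI : IsStrictTotalOrder (List α) (List.Lex r') := { isStrictWeakOrder_of_isOrderConnected with }
  obtain ⟨u, hu, humin⟩ := exists_list_min (List.Lex r') _ hR
  obtain ⟨b, hb, hbu⟩ := List.mem_map.mp hu
  rw [List.mem_range] at hb
  subst hbu
  have hulyn : IsLyndonWord r' (w.rotate b) := by
    rw [lyndon_iff_min_rotate]
    constructor
    · intro h0
      apply hne
      have h1 := congrArg List.length h0
      rw [List.length_rotate] at h1
      simp at h1
      exact h1
    · intro i hi0 hin
      rw [List.length_rotate] at hin
      rw [List.rotate_rotate]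
      have hmem : w.rotate ((b + i) % w.length) ∈ (List.range w.length).map (w.rotate ·) :=
        List.mem_map.mpr ⟨(b + i) % w.length, List.mem_range.mpr (Nat.mod_lt _ hlen), rfl⟩
      have hneq : w.rotate ((b + i) % w.length) ≠ w.rotate b := by
        intro he
        have h2 := prim_rotate_inj hne hprim (Nat.mod_lt _ hlen) hb he
        have h3 : (b + i) % w.length = (b + 0) % w.length := by
          simpa [Nat.mod_eq_of_lt hb] using h2
        have h4 := (Nat.ModEq.add_left_cancel' b (h3 : Nat.ModEq _ _ _))
        simp [Nat.ModEq, Nat.mod_eq_of_lt hin] at h4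
        omega
      have h5 := humin _ hmem hneq
      rwa [List.rotate_mod] at h5
  refine ⟨w.rotate b, ⟨⟨b, rfl⟩, hulyn⟩, ?_⟩
  rintro v ⟨hvrot, hvlyn⟩
  exact lyndon_rotation_unique hvlyn hulyn (hvrot.symm.trans ⟨b, rfl⟩)

end Lyndon



lemma directSum_castAdd {a b : ℕ} (π₁ : Perm (Fin a)) (π₂ : Perm (Fin b)) (i : Fin a) :
    permDirectSum π₁ π₂ (Fin.castAdd b i) = Fin.castAdd b (π₁ i) := by
  rw [← finSumFinEquiv_apply_left, ← finSumFinEquiv_apply_left]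
  simp [permDirectSum, Equiv.permCongr_apply]

lemma directSum_natAdd {a b : ℕ} (π₁ : Perm (Fin a)) (π₂ : Perm (Fin b)) (i : Fin b) :
    permDirectSum π₁ π₂ (Fin.natAdd a i) = Fin.natAdd a (π₂ i) := by
  rw [← finSumFinEquiv_apply_right, ← finSumFinEquiv_apply_right]
  simp [permDirectSum, Equiv.permCongr_apply]

lemma directSum_apply_lt {a b : ℕ} (π₁ : Perm (Fin a)) (π₂ : Perm (Fin b)) (i : Fin (a + b))
    (h : (i : ℕ) < a) : ((permDirectSum π₁ π₂ i : Fin (a + b)) : ℕ) = π₁ ⟨i, h⟩ := by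
  have e : permDirectSum π₁ π₂ i = permDirectSum π₁ π₂ (Fin.castAdd b ⟨(i : ℕ), h⟩) :=
    congrArg _ (Fin.ext rfl)
  rw [e, directSum_castAdd]
  rfl

lemma directSum_apply_ge {a b : ℕ} (π₁ : Perm (Fin a)) (π₂ : Perm (Fin b)) (i : Fin (a + b))
    (h : a ≤ (i : ℕ)) :
    ((permDirectSum π₁ π₂ i : Fin (a + b)) : ℕ) = a + π₂ ⟨(i : ℕ) - a, by have := i.isLt; omega⟩ := by
  have e : permDirectSum π₁ π₂ i
      = permDirectSum π₁ π₂ (Fin.natAdd a ⟨(i : ℕ) - a, by have := i.isLt; omega⟩) :=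
    congrArg _ (Fin.ext (by simp [Fin.natAdd]; omega))
  rw [e, directSum_natAdd]
  rfl

def HasCut {n : ℕ} (π : Perm (Fin n)) (m : ℕ) : Prop :=
  ∀ i : Fin n, (i : ℕ) < m → ((π i : Fin n) : ℕ) < m

lemma hasCut_symm {n : ℕ} {π : Perm (Fin n)} {m : ℕ} (h : HasCut π m) : HasCut π.symm m := by
  classical
  set S : Finset (Fin n) := Finset.univ.filter (fun i => (i : ℕ) < m) with hS
  have hsub : S.image π ⊆ S := by
    intro j hj
    obtain ⟨i, hi, rfl⟩ := Finset.mem_image.mp hj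
    simp only [hS, Finset.mem_filter, Finset.mem_univ, true_and] at hi ⊢
    exact h i hi
  have himg : S.image π = S :=
    Finset.eq_of_subset_of_card_le hsub
      (le_of_eq (Finset.card_image_of_injective S π.injective).symm)
  intro j hj
  have hjS : j ∈ S := by simp [hS, hj]
  rw [← himg] at hjS
  obtain ⟨i, hi, hij⟩ := Finset.mem_image.mp hjS
  have : π.symm j = i := by rw [← hij]; simp
  rw [this]
  simpa [hS] using hi

lemma hasCut_compl {n : ℕ} {π : Perm (Fin n)} {m : ℕ} (h : HasCut π m) :
    ∀ i : Fin n, m ≤ (i : ℕ) → m ≤ ((π i : Fin n) : ℕ) := by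
  intro i hi
  by_contra hc
  push_neg at hc
  have := hasCut_symm h (π i) hc
  simp at this
  omega

lemma isDecomposable_of_hasCut {n : ℕ} {π : Perm (Fin n)} {m : ℕ}
    (h0 : 0 < m) (hn : m < n) (h : HasCut π m) : IsDecomposable π := by
  have hsymm := hasCut_symm h
  have hcompl := hasCut_compl h
  have hcompl' := hasCut_compl hsymm
  let π₁ : Perm (Fin m) :=
    { toFun := fun i => ⟨(π ⟨(i : ℕ), by omega⟩ : Fin n), h _ i.isLt⟩
      invFun := fun i => ⟨(π.symm ⟨(i : ℕ), by omega⟩ : Fin n), hsymm _ i.isLt⟩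
      left_inv := by
        intro i
        apply Fin.ext
        show ((π.symm ⟨((π ⟨(i : ℕ), _⟩ : Fin n) : ℕ), _⟩ : Fin n) : ℕ) = (i : ℕ)
        rw [Fin.eta, Equiv.symm_apply_apply]
      right_inv := by
        intro i
        apply Fin.ext
        show ((π ⟨((π.symm ⟨(i : ℕ), _⟩ : Fin n) : ℕ), _⟩ : Fin n) : ℕ) = (i : ℕ)
        rw [Fin.eta, Equiv.apply_symm_apply] }
  let π₂ : Perm (Fin (n - m)) :=
    { toFun := fun i => ⟨((π ⟨m + (i : ℕ), by omega⟩ : Fin n) : ℕ) - m, by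
        have h1 := hcompl ⟨m + (i : ℕ), by omega⟩ (by simp)
        have h2 := (π ⟨m + (i : ℕ), by omega⟩).isLt
        omega⟩
      invFun := fun i => ⟨((π.symm ⟨m + (i : ℕ), by omega⟩ : Fin n) : ℕ) - m, by
        have h1 := hcompl' ⟨m + (i : ℕ), by omega⟩ (by simp)
        have h2 := (π.symm ⟨m + (i : ℕ), by omega⟩).isLt
        omega⟩
      left_inv := by
        intro i
        apply Fin.ext
        show ((π.symm ⟨m + (((π ⟨m + (i : ℕ), _⟩ : Fin n) : ℕ) - m), _⟩ : Fin n) : ℕ) - m = (i : ℕ)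
        have h1 := hcompl ⟨m + (i : ℕ), by omega⟩ (by simp)
        have h2 : (⟨m + (((π ⟨m + (i : ℕ), by omega⟩ : Fin n) : ℕ) - m), by
            have := (π ⟨m + (i : ℕ), by omega⟩).isLt; omega⟩ : Fin n)
            = π ⟨m + (i : ℕ), by omega⟩ := by
          apply Fin.ext
          show m + (((π ⟨m + (i : ℕ), _⟩ : Fin n) : ℕ) - m) = _
          omega
        rw [h2, Equiv.symm_apply_apply]
        show m + (i : ℕ) - m = (i : ℕ)
        omega
      right_inv := by
        intro i
        apply Fin.ext
        show ((π ⟨m + (((π.symm ⟨m + (i : ℕ), _⟩ : Fin n) : ℕ) - m), _⟩ : Fin n) : ℕ) - m = (i : ℕ)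
        have h1 := hcompl' ⟨m + (i : ℕ), by omega⟩ (by simp)
        have h2 : (⟨m + (((π.symm ⟨m + (i : ℕ), by omega⟩ : Fin n) : ℕ) - m), by
            have := (π.symm ⟨m + (i : ℕ), by omega⟩).isLt; omega⟩ : Fin n)
            = π.symm ⟨m + (i : ℕ), by omega⟩ := by
          apply Fin.ext
          show m + (((π.symm ⟨m + (i : ℕ), _⟩ : Fin n) : ℕ) - m) = _
          omega
        rw [h2, Equiv.apply_symm_apply]
        show m + (i : ℕ) - m = (i : ℕ)
        omega }
  have hv1 : ∀ j : Fin m, ((π₁ j : Fin m) : ℕ) = ((π ⟨(j : ℕ), by omega⟩ : Fin n) : ℕ) :=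
    fun j => rfl
  have hv2 : ∀ j : Fin (n - m),
      ((π₂ j : Fin (n - m)) : ℕ) = ((π ⟨m + (j : ℕ), by omega⟩ : Fin n) : ℕ) - m :=
    fun j => rfl
  have hmn : m + (n - m) = n := by omega
  refine ⟨m, n - m, h0, by omega, hmn, π₁, π₂, ?_⟩
  apply Equiv.ext
  intro i
  apply Fin.ext
  rw [Equiv.permCongr_apply]
  rw [show ((finCongr hmn (permDirectSum π₁ π₂ ((finCongr hmn).symm i)) : Fin n) : ℕ)
      = ((permDirectSum π₁ π₂ ((finCongr hmn).symm i) : Fin (m + (n - m))) : ℕ) from rfl]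
  set j : Fin (m + (n - m)) := (finCongr hmn).symm i with hjdef
  have hj : (j : ℕ) = (i : ℕ) := rfl
  rcases lt_or_ge ((i : ℕ)) m with hi | hi
  · rw [directSum_apply_lt π₁ π₂ j (by omega)]
    rw [hv1]
    congr 1
  · rw [directSum_apply_ge π₁ π₂ j (by omega)]
    rw [hv2]
    have h1 := hcompl i hi
    have h2 : (⟨m + (((j : ℕ) - m)), by omega⟩ : Fin n) = i := by
      apply Fin.ext
      show m + ((j : ℕ) - m) = (i : ℕ)
      omega
    rw [h2]
    omega

def CutSig (p : PermSig) (m : ℕ) : Prop := HasCut p.2 m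

lemma cutSig_sigSum (p q : PermSig) : CutSig (sigSum p q) p.1 := by
  intro i hi
  show ((permDirectSum p.2 q.2) i : ℕ) < p.1
  rw [directSum_apply_lt p.2 q.2 i hi]
  exact (p.2 ⟨i, hi⟩).isLt

lemma sigSumList_cons (p : PermSig) {L : List PermSig} (h : L ≠ []) :
    sigSumList (p :: L) = sigSum p (sigSumList L) := by
  cases L with
  | nil => exact absurd rfl h
  | cons q M => rfl

lemma sigSumList_fst : ∀ L : List PermSig, (sigSumList L).1 = (L.map Sigma.fst).sum
  | [] => rfl
  | [p] => by simp [sigSumList]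
  | p :: q :: L => by
    rw [sigSumList]
    show p.1 + (sigSumList (q :: L)).1 = _
    rw [sigSumList_fst (q :: L)]
    simp

lemma indec_fst_pos (x : Indec) : 1 ≤ x.1.1 := x.2.1

lemma map_val_cons_indec (x : Indec) (t : List Indec) :
    (x :: t).map Subtype.val = x.1 :: t.map Subtype.val := rfl

lemma map_val_nil_indec : ([] : List Indec).map Subtype.val = [] := rfl

lemma sum_fst_pos {t : List Indec} (h : t ≠ []) :
    1 ≤ ((t.map Subtype.val).map Sigma.fst).sum := by
  cases t with
  | nil => exact absurd rfl h
  | cons x t =>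
    have := indec_fst_pos x
    simp only [map_val_cons_indec, List.map_cons, List.sum_cons]
    omega

lemma sigSum_cancel {p q p' q' : PermSig} (hfst : p.1 = p'.1) (h : sigSum p q = sigSum p' q') :
    p = p' ∧ q = q' := by
  obtain ⟨a, π₁⟩ := p
  obtain ⟨b, π₂⟩ := q
  obtain ⟨a', π₁'⟩ := p'
  obtain ⟨b', π₂'⟩ := q'
  simp only at hfst
  subst hfst
  have hsz : a + b = a + b' := congrArg Sigma.fst h
  have hb : b = b' := by omega
  subst hb
  simp only [sigSum] at h
  injection h with h1 h2
  have hD : permDirectSum π₁ π₂ = permDirectSum π₁' π₂' := h2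
  have hπ1 : π₁ = π₁' := by
    apply Equiv.ext
    intro i
    have h1 := congrArg (fun σ : Perm (Fin (a + b)) => σ (Fin.castAdd b i)) hD
    simp only [directSum_castAdd] at h1
    have h2 : (Fin.castAdd b (π₁ i)).val = (Fin.castAdd b (π₁' i)).val := congrArg Fin.val h1
    exact Fin.ext h2
  have hπ2 : π₂ = π₂' := by
    apply Equiv.ext
    intro i
    have h1 := congrArg (fun σ : Perm (Fin (a + b)) => σ (Fin.natAdd a i)) hD
    simp only [directSum_natAdd] at h1
    have h2 := congrArg Fin.val h1
    simp only [Fin.natAdd] at h2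
    apply Fin.ext
    omega
  exact ⟨by rw [hπ1], by rw [hπ2]⟩

lemma hasCut_head {b : ℕ} (y : Perm (Fin b)) (q : PermSig) {m : ℕ}
    (h : CutSig (sigSum ⟨b, y⟩ q) m) (hmb : m ≤ b) : HasCut y m := by
  intro i hi
  have hpf : (i : ℕ) < b + q.1 := lt_of_lt_of_le i.isLt (Nat.le_add_right b q.1)
  have hlt := h ⟨(i : ℕ), hpf⟩ hi
  have he : ((permDirectSum y q.2 ⟨(i : ℕ), hpf⟩ : Fin (b + q.1)) : ℕ)
      = y ⟨(i : ℕ), i.isLt⟩ := directSum_apply_lt y q.2 _ i.isLt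
  rw [show (((sigSum ⟨b, y⟩ q).2 ⟨(i : ℕ), hpf⟩ : Fin (b + q.1)) : ℕ)
      = ((permDirectSum y q.2 ⟨(i : ℕ), hpf⟩ : Fin (b + q.1)) : ℕ)
      from rfl, he] at hlt
  simpa using hlt

lemma head_not_lt (x : Indec) (t : List Indec) (y : Indec) (t' : List Indec)
    (h : sigSumList ((x :: t).map Subtype.val) = sigSumList ((y :: t').map Subtype.val)) :
    ¬ x.1.1 < y.1.1 := by
  intro hab
  have hsz := congrArg Sigma.fst h
  rw [sigSumList_fst, sigSumList_fst] at hsz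
  simp only [map_val_cons_indec, List.map_cons, List.sum_cons] at hsz
  rcases eq_or_ne t [] with rfl | ht
  · simp only [map_val_nil_indec, List.map_nil, List.sum_nil, Nat.add_zero] at hsz
    omega
  · have hmap : t.map Subtype.val ≠ [] := fun hh => ht (List.map_eq_nil_iff.mp hh)
    have hcut : CutSig (sigSumList ((x :: t).map Subtype.val)) x.1.1 := by
      rw [map_val_cons_indec, sigSumList_cons _ hmap]
      exact cutSig_sigSum _ _
    rw [h] at hcut
    rcases eq_or_ne t' [] with rfl | ht'
    · have h1 : sigSumList ((y :: ([] : List Indec)).map Subtype.val) = y.1 := rfl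
      rw [h1] at hcut
      exact y.2.2 (isDecomposable_of_hasCut x.2.1 hab hcut)
    · have hmap' : t'.map Subtype.val ≠ [] := fun hh => ht' (List.map_eq_nil_iff.mp hh)
      rw [map_val_cons_indec, sigSumList_cons _ hmap'] at hcut
      have hy : HasCut y.1.2 x.1.1 := hasCut_head y.1.2 _ hcut hab.le
      exact y.2.2 (isDecomposable_of_hasCut x.2.1 hab hy)

theorem blocks_unique : ∀ (l l' : List Indec),
    sigSumList (l.map Subtype.val) = sigSumList (l'.map Subtype.val) → l = l' := by
  intro l
  induction l with
  | nil =>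
    intro l' h
    cases l' with
    | nil => rfl
    | cons y t' =>
      exfalso
      have hsz := congrArg Sigma.fst h
      rw [sigSumList_fst, sigSumList_fst] at hsz
      simp only [map_val_nil_indec, map_val_cons_indec, List.map_nil, List.sum_nil, List.map_cons, List.sum_cons] at hsz
      have := indec_fst_pos y
      omega
  | cons x t ih =>
    intro l' h
    cases l' with
    | nil =>
      exfalso
      have hsz := congrArg Sigma.fst h
      rw [sigSumList_fst, sigSumList_fst] at hsz
      simp only [map_val_nil_indec, map_val_cons_indec, List.map_nil, List.sum_nil, List.map_cons, List.sum_cons] at hsz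
      have := indec_fst_pos x
      omega
    | cons y t' =>
      have hab : x.1.1 = y.1.1 :=
        le_antisymm (not_lt.mp (head_not_lt y t' x t h.symm)) (not_lt.mp (head_not_lt x t y t' h))
      have hsz := congrArg Sigma.fst h
      rw [sigSumList_fst, sigSumList_fst] at hsz
      simp only [map_val_cons_indec, List.map_cons, List.sum_cons] at hsz
      rcases eq_or_ne t [] with rfl | ht
      · rcases eq_or_ne t' [] with rfl | ht'
        · have hxy : x.1 = y.1 := h
          rw [Subtype.ext hxy]
        · exfalso
          have h1 := sum_fst_pos ht'
          simp only [map_val_nil_indec, List.map_nil, List.sum_nil, Nat.add_zero] at hsz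
          omega
      · rcases eq_or_ne t' [] with rfl | ht'
        · exfalso
          have h1 := sum_fst_pos ht
          simp only [map_val_nil_indec, List.map_nil, List.sum_nil, Nat.add_zero] at hsz
          omega
        · replace h : sigSum x.1 (sigSumList (t.map Subtype.val))
              = sigSum y.1 (sigSumList (t'.map Subtype.val)) :=
            (sigSumList_cons x.1 (fun hh => ht (List.map_eq_nil_iff.mp hh))).symm.trans
              (h.trans (sigSumList_cons y.1 (fun hh => ht' (List.map_eq_nil_iff.mp hh))))
          obtain ⟨h1, h2⟩ := sigSum_cancel hab h
          rw [Subtype.ext h1, ih t' h2]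

def RelLyn (r r' : Indec → Indec → Prop) (p q : PermSig) : Prop :=
  ∃ l u : List Indec, IsBlockDecomposition p.2 l ∧ IsLyndonWord r l ∧
    IsBlockDecomposition q.2 u ∧ IsLyndonWord r' u ∧ l.IsRotated u

lemma relLyn_symm {r r' : Indec → Indec → Prop} {p q : PermSig} (h : RelLyn r r' p q) :
    RelLyn r' r q p := by
  obtain ⟨l, u, h1, h2, h3, h4, h5⟩ := h
  exact ⟨u, l, h3, h4, h1, h2, h5.symm⟩

lemma relLyn_fst {r r' : Indec → Indec → Prop} {p q : PermSig} (h : RelLyn r r' p q) :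
    p.1 = q.1 := by
  obtain ⟨l, u, h1, h2, h3, h4, h5⟩ := h
  have e1 := congrArg Sigma.fst h1
  have e2 := congrArg Sigma.fst h3
  rw [sigSumList_fst] at e1 e2
  have e3 : ((l.map Subtype.val).map Sigma.fst).sum = ((u.map Subtype.val).map Sigma.fst).sum :=
    List.Perm.sum_eq ((h5.perm.map Subtype.val).map Sigma.fst)
  simp only at e1 e2
  omega

lemma relLyn_lyndon' {r r' : Indec → Indec → Prop} {p q : PermSig} (h : RelLyn r r' p q) :
    IsLyndonPermWrt r' q.2 := by
  obtain ⟨l, u, h1, h2, h3, h4, h5⟩ := h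
  exact ⟨u, h3, h4⟩

lemma relLyn_exists_unique (r r' : Indec → Indec → Prop)
    (hr : IsStrictTotalOrder Indec r) (hr' : IsStrictTotalOrder Indec r')
    (p : PermSig) (hp : IsLyndonPermWrt r p.2) : ∃! q, RelLyn r r' p q := by
  haveI := hr
  haveI := hr'
  obtain ⟨l, hbd, hlyn⟩ := hp
  obtain ⟨u, ⟨hrot, hulyn⟩, -⟩ := exists_unique_lyndon_rotation (r := r) (r' := r') hlyn
  refine ⟨sigSumList (u.map Subtype.val), ⟨l, u, hbd, hlyn, rfl, hulyn, hrot⟩, ?_⟩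
  rintro q' ⟨l₂, u₂, hbd₂, hlyn₂, hbdq₂, hulyn₂, hrot₂⟩
  have hl : l₂ = l := blocks_unique _ _ (hbd₂.trans hbd.symm)
  subst hl
  have hu : u₂ = u := lyndon_rotation_unique hulyn₂ hulyn (hrot₂.symm.trans hrot)
  subst hu
  exact hbdq₂.symm

noncomputable def lynF (s s' : Indec → Indec → Prop) (hs : IsStrictTotalOrder Indec s)
    (hs' : IsStrictTotalOrder Indec s') (k : ℕ)
    (x : {p : PermSig // 2 ≤ p.1 ∧ p.1 ≤ k ∧ IsLyndonPermWrt s p.2}) :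
    {p : PermSig // 2 ≤ p.1 ∧ p.1 ≤ k ∧ IsLyndonPermWrt s' p.2} :=
  ⟨(relLyn_exists_unique s s' hs hs' x.1 x.2.2.2).exists.choose,
    by
      rw [← relLyn_fst (relLyn_exists_unique s s' hs hs' x.1 x.2.2.2).exists.choose_spec]
      exact x.2.1,
    by
      rw [← relLyn_fst (relLyn_exists_unique s s' hs hs' x.1 x.2.2.2).exists.choose_spec]
      exact x.2.2.1,
    relLyn_lyndon' (relLyn_exists_unique s s' hs hs' x.1 x.2.2.2).exists.choose_spec⟩

lemma lynF_spec (s s' : Indec → Indec → Prop) (hs : IsStrictTotalOrder Indec s)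
    (hs' : IsStrictTotalOrder Indec s') (k : ℕ)
    (x : {p : PermSig // 2 ≤ p.1 ∧ p.1 ≤ k ∧ IsLyndonPermWrt s p.2}) :
    RelLyn s s' x.1 (lynF s s' hs hs' k x).1 :=
  (relLyn_exists_unique s s' hs hs' x.1 x.2.2.2).exists.choose_spec

lemma lynF_inv (s s' : Indec → Indec → Prop) (hs : IsStrictTotalOrder Indec s)
    (hs' : IsStrictTotalOrder Indec s') (k : ℕ)
    (x : {p : PermSig // 2 ≤ p.1 ∧ p.1 ≤ k ∧ IsLyndonPermWrt s p.2}) :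
    lynF s' s hs' hs k (lynF s s' hs hs' k x) = x := by
  apply Subtype.ext
  have s1 := lynF_spec s s' hs hs' k x
  have s2 := lynF_spec s' s hs' hs k (lynF s s' hs hs' k x)
  exact (relLyn_exists_unique s' s hs' hs (lynF s s' hs hs' k x).1
    (relLyn_lyndon' s1)).unique s2 (relLyn_symm s1)

/-- The number of Lyndon permutations of size at least `2` and at most `k` does not
depend on the choice of the linear order on the alphabet of indecomposable permutations. -/
theorem card_lyndon_independent_of_order (r r' : Indec → Indec → Prop)
    (hr : IsStrictTotalOrder Indec r) (hr' : IsStrictTotalOrder Indec r') (k : ℕ) :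
    Nat.card {p : PermSig // 2 ≤ p.1 ∧ p.1 ≤ k ∧ IsLyndonPermWrt r p.2}
      = Nat.card {p : PermSig // 2 ≤ p.1 ∧ p.1 ≤ k ∧ IsLyndonPermWrt r' p.2} := by
  exact Nat.card_congr
    { toFun := lynF r r' hr hr' k
      invFun := lynF r' r hr' hr k
      left_inv := lynF_inv r r' hr hr' k
      right_inv := lynF_inv r' r hr' hr k }
end

section
/- Every nonempty word over a linearly ordered alphabet can be expressed as a concatenation w₁w₂⋯wₙ of Lyndon words with w₁ ⪰ w₂ ⪰ ⋯ ⪰ wₙ in the lexicographic order, and this expression is unique. -/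
namespace LyndonAux

variable {α : Type*} [LinearOrder α]

/-- abbreviation -/
abbrev L (u : List α) : Prop := IsLyndonWord (· < · : α → α → Prop) u

lemma lex_iff_lt {x y : List α} : List.Lex (· < ·) x y ↔ x < y := Iff.rfl

lemma lt_append {x t : List α} (ht : t ≠ []) : x < x ++ t := by
  induction x with
  | nil =>
    cases t with
    | nil => exact absurd rfl ht
    | cons a t => exact List.Lex.nil
  | cons a x ih => exact List.Lex.cons ih

lemma prefix_le {x y : List α} (h : x <+: y) : x ≤ y := by
  obtain ⟨t, rfl⟩ := h
  rcases eq_or_ne t [] with rfl | ht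
  · simp
  · exact le_of_lt (lt_append ht)

lemma lemD : ∀ (x y : List α), x < y → ¬ x <+: y → ∀ s t, x ++ s < y ++ t := by
  intro x
  induction x with
  | nil => intro y _ hp; exact absurd (List.nil_prefix) hp
  | cons a x ih =>
    intro y hxy hp s t
    cases y with
    | nil => exact absurd hxy List.not_lex_nil
    | cons b y =>
      cases hxy with
      | cons h =>
        have hp' : ¬ x <+: y := fun hc => hp (List.cons_prefix_cons.mpr ⟨rfl, hc⟩)
        exact List.Lex.cons (ih y h hp' s t)
      | rel h => exact List.Lex.rel h

lemma lyndon_lt_drop {u : List α} (hu : L u) {i : ℕ} (hi : 0 < i) (hil : i < u.length) :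
    u < u.drop i := by
  have h1 : ¬ (u.drop i < u) := hu.2 i hi hil
  have h2 : u ≠ u.drop i := by
    intro hc
    have := congrArg List.length hc
    simp [List.length_drop] at this
    omega
  exact lt_of_le_of_ne (le_of_not_gt h1) h2

lemma key_append_lt {u v : List α} (hu : L u) (hv : L v) (h : u < v) : u ++ v < v := by
  by_cases hp : u <+: v
  · obtain ⟨z, rfl⟩ := hp
    have hz : z ≠ [] := by
      rintro rfl
      simp at h
    have h1 : 0 < u.length := List.length_pos_iff.mpr hu.1
    have h2 : u.length < (u ++ z).length := by
      simp [List.length_append]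
      exact List.length_pos_iff.mpr hz
    have h3 : (u ++ z).drop u.length = z := by simp
    have h4 : u ++ z < z := by
      have := lyndon_lt_drop hv h1 h2; rwa [h3] at this
    have := List.Lex.append_left (· < ·) (lex_iff_lt.mpr h4) u
    exact lex_iff_lt.mp this
  · have := lemD u v h hp v []
    simpa using this

lemma lyndon_append {u v : List α} (hu : L u) (hv : L v) (h : u < v) : L (u ++ v) := by
  constructor
  · simp [hu.1]
  · intro i hi hil hcon
    rw [List.length_append] at hil
    rw [List.drop_append] at hcon
    by_cases hiu : i < u.length
    · have hdrop : i - u.length = 0 := by omega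
      rw [hdrop, List.drop_zero] at hcon
      have h1 : u < u.drop i := lyndon_lt_drop hu hi hiu
      have h2 : ¬ u <+: u.drop i := by
        intro hc
        have := hc.length_le
        simp [List.length_drop] at this
        omega
      have := lemD u (u.drop i) h1 h2 v v
      exact absurd hcon (not_lt.mpr (le_of_lt this))
    · have hdrop : u.drop i = [] := by
        apply List.drop_eq_nil_of_le; omega
      rw [hdrop, List.nil_append] at hcon
      set j := i - u.length with hj
      have hjv : j < v.length := by omega
      have hkey : u ++ v < v := key_append_lt hu hv h
      rcases Nat.eq_zero_or_pos j with hj0 | hj0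
      · rw [hj0, List.drop_zero] at hcon
        exact absurd hcon (not_lt.mpr (le_of_lt hkey))
      · have h1 : v < v.drop j := lyndon_lt_drop hv hj0 hjv
        have := lt_trans hkey h1
        exact absurd hcon (not_lt.mpr (le_of_lt this))

lemma lyndon_singleton (a : α) : L [a] := by
  refine ⟨by simp, fun i hi hil => ?_⟩
  simp at hil
  omega

lemma not_chain'_decomp {β : Type*} {P : β → β → Prop} :
    ∀ (l : List β), ¬ l.Chain' P → ∃ l₁ a b l₂, l = l₁ ++ a :: b :: l₂ ∧ ¬ P a b := by
  intro l
  induction l with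
  | nil => intro h; exact absurd List.isChain_nil h
  | cons a l ih =>
    intro h
    cases l with
    | nil => exact absurd (List.isChain_singleton a) h
    | cons b t =>
      rw [List.Chain', List.isChain_cons_cons] at h
      push_neg at h
      by_cases hab : P a b
      · obtain ⟨l₁, x, y, l₂, heq, hxy⟩ := ih (h hab)
        exact ⟨a :: l₁, x, y, l₂, by rw [heq]; rfl, hxy⟩
      · exact ⟨[], a, b, t, rfl, hab⟩

lemma exists_fac : ∀ (n : ℕ) (l : List (List α)), l.length = n → (∀ u ∈ l, L u) →
    ∃ m : List (List α), (∀ u ∈ m, L u) ∧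
      m.Chain' (fun u v => ¬ List.Lex (· < · : α → α → Prop) u v) ∧
      m.flatten = l.flatten := by
  intro n
  induction n using Nat.strong_induction_on with
  | _ n ih =>
    intro l hlen hl
    by_cases hc : l.Chain' (fun u v => ¬ List.Lex (· < · : α → α → Prop) u v)
    · exact ⟨l, hl, hc, rfl⟩
    · obtain ⟨l₁, a, b, l₂, rfl, hab⟩ := not_chain'_decomp l hc
      push_neg at hab
      have hab' : a < b := lex_iff_lt.mp hab
      have ha : L a := hl a (by simp)
      have hb : L b := hl b (by simp)
      have hmerge : L (a ++ b) := lyndon_append ha hb hab'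
      set l' := l₁ ++ (a ++ b) :: l₂ with hl'
      have hlen' : l'.length < n := by
        subst hlen; simp [hl', List.length_append]
      have hl'' : ∀ u ∈ l', L u := by
        intro u hu
        simp [hl'] at hu
        rcases hu with hu | hu | hu
        · exact hl u (by simp [hu])
        · exact hu ▸ hmerge
        · exact hl u (by simp [hu])
      obtain ⟨m, hm1, hm2, hm3⟩ := ih l'.length hlen' l' rfl hl''
      refine ⟨m, hm1, hm2, ?_⟩
      rw [hm3]
      simp [hl', List.flatten_append]

lemma prefix_flatten : ∀ (l : List (List α)), (∀ x ∈ l, x ≠ []) → ∀ q : List α, q ≠ [] →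
    q <+: l.flatten → ∃ x ∈ l, ∃ q', q' ≠ [] ∧ q' <+: x ∧ q' <:+ q := by
  intro l
  induction l with
  | nil =>
    intro _ q hq hpre
    simp at hpre
    exact absurd hpre hq
  | cons x l ih =>
    intro hne q hq hpre
    rw [List.flatten_cons] at hpre
    rcases List.prefix_or_prefix_of_prefix hpre (List.prefix_append x l.flatten) with h | h
    · exact ⟨x, by simp, q, hq, h, List.suffix_refl q⟩
    · obtain ⟨q₂, rfl⟩ := h
      rcases eq_or_ne q₂ [] with rfl | hq₂
      · exact ⟨x, by simp, x ++ [], by simpa using hq, by simp, List.suffix_refl _⟩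
      · have hpre₂ : q₂ <+: l.flatten := by
          obtain ⟨t, ht⟩ := hpre
          rw [List.append_assoc] at ht
          exact ⟨t, List.append_cancel_left ht⟩
        obtain ⟨x', hx', q', hq', hpref, hsuf⟩ :=
          ih (fun y hy => hne y (by simp [hy])) q₂ hq₂ hpre₂
        exact ⟨x', by simp [hx'], q', hq', hpref, hsuf.trans (List.suffix_append x q₂)⟩

lemma le_head : ∀ (l : List (List α)) (u : List α),
    l.Chain' (fun a b => ¬ List.Lex (· < · : α → α → Prop) a b) → ∀ x ∈ l.tail, x ≤ u →
    True := by intro _ _ _ _ _ _; trivial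

lemma chain_le_head : ∀ (l : List (List α)) (u : List α),
    (u :: l).Chain' (fun a b => ¬ List.Lex (· < · : α → α → Prop) a b) →
    ∀ x ∈ l, x ≤ u := by
  intro l
  induction l with
  | nil => intro u _ x hx; simp at hx
  | cons v l ih =>
    intro u hch x hx
    rw [List.Chain', List.isChain_cons_cons] at hch
    have hvu : v ≤ u := le_of_not_gt hch.1
    rcases List.mem_cons.mp hx with rfl | hx
    · exact hvu
    · exact le_trans (ih v hch.2 x hx) hvu

lemma no_longer_prefix (u : List α) (l : List (List α))
    (hl : ∀ x ∈ u :: l, L x)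
    (hch : (u :: l).Chain' (fun a b => ¬ List.Lex (· < · : α → α → Prop) a b))
    (p : List α) (hp : L p) (hpre : p <+: (u :: l).flatten)
    (hlen : u.length < p.length) : False := by
  rw [List.flatten_cons] at hpre
  have hup : u <+: p := by
    rcases List.prefix_or_prefix_of_prefix (List.prefix_append u l.flatten) hpre with h | h
    · exact h
    · exact absurd h.length_le (by omega)
  obtain ⟨q, rfl⟩ := hup
  have hq : q ≠ [] := by
    rintro rfl; simp at hlen
  have hqpre : q <+: l.flatten := by
    obtain ⟨t, ht⟩ := hpre
    rw [List.append_assoc] at ht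
    exact ⟨t, List.append_cancel_left ht⟩
  obtain ⟨x, hx, q', hq', hpref, hsuf⟩ :=
    prefix_flatten l (fun y hy => (hl y (by simp [hy])).1) q hq hqpre
  -- q' is a proper nonempty suffix of u ++ q
  have hsuf' : q' <:+ u ++ q := hsuf.trans (List.suffix_append u q)
  obtain ⟨s, hs⟩ := hsuf'
  have hslen : s ≠ [] := by
    rintro rfl
    rw [List.nil_append] at hs
    have hlq : q'.length = u.length + q.length := by rw [hs]; simp
    have hql : q'.length ≤ q.length := hsuf.length_le
    have hu0 : 0 < u.length := List.length_pos_iff.mpr (hl u (by simp)).1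
    omega
  have h0 : 0 < s.length := List.length_pos_iff.mpr hslen
  have h1 : s.length < (u ++ q).length := by
    have := congrArg List.length hs
    simp [List.length_append] at this ⊢
    have h2 : 0 < q'.length := List.length_pos_iff.mpr hq'
    omega
  have hdrop : (u ++ q).drop s.length = q' := by
    conv_lhs => rw [← hs]
    simp
  have hplt : u ++ q < q' := hdrop ▸ lyndon_lt_drop hp h0 h1
  have hle1 : q' ≤ x := prefix_le hpref
  have hle2 : x ≤ u := chain_le_head l u hch x hx
  have hle3 : u ≤ u ++ q := prefix_le (List.prefix_append u q)
  exact absurd (lt_of_lt_of_le hplt (le_trans hle1 (le_trans hle2 hle3))) (lt_irrefl _)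

lemma uniq : ∀ (l m : List (List α)), (∀ u ∈ l, L u) →
    l.Chain' (fun u v => ¬ List.Lex (· < · : α → α → Prop) u v) →
    (∀ u ∈ m, L u) →
    m.Chain' (fun u v => ¬ List.Lex (· < · : α → α → Prop) u v) →
    l.flatten = m.flatten → l = m := by
  intro l
  induction l with
  | nil =>
    intro m _ _ hm _ hf
    cases m with
    | nil => rfl
    | cons v m =>
      exfalso
      simp at hf
      exact (hm v (by simp)).1 hf.1
  | cons u l ih =>
    intro m hl cl hm cm hf
    cases m with
    | nil =>
      exfalso
      simp at hf
      exact (hl u (by simp)).1 hf.1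
    | cons v m =>
      have huv : u = v := by
        by_contra hne
        have hupre : u <+: (u :: l).flatten := by
          rw [List.flatten_cons]; exact List.prefix_append u l.flatten
        have hvpre : v <+: (u :: l).flatten := by
          rw [hf, List.flatten_cons]; exact List.prefix_append v m.flatten
        rcases List.prefix_or_prefix_of_prefix hupre hvpre with h | h
        · have hlen : u.length < v.length :=
            lt_of_le_of_ne h.length_le (fun hc => hne (List.IsPrefix.eq_of_length h hc))
          exact no_longer_prefix u l hl cl v (hm v (by simp)) hvpre hlen
        · have hlen : v.length < u.length :=
            lt_of_le_of_ne h.length_le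
              (fun hc => hne (List.IsPrefix.eq_of_length h hc).symm)
          have hupre' : u <+: (v :: m).flatten := by rw [← hf]; exact hupre
          exact no_longer_prefix v m hm cm u (hl u (by simp)) hupre' hlen
      subst huv
      have hf' : l.flatten = m.flatten := by
        rw [List.flatten_cons, List.flatten_cons] at hf
        exact List.append_cancel_left hf
      have := ih m (fun x hx => hl x (by simp [hx]))
        ((List.isChain_cons.mp cl).2)
        (fun x hx => hm x (by simp [hx]))
        ((List.isChain_cons.mp cm).2) hf'
      rw [this]

end LyndonAux

/-- Chen–Fox–Lyndon: every nonempty word over a linearly ordered alphabet has a unique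
factorization into a lexicographically non-increasing sequence of Lyndon words. -/
theorem lyndon_factorization {α : Type*} [LinearOrder α] (w : List α) (hw : w ≠ []) :
    ∃! l : List (List α),
      (∀ u ∈ l, IsLyndonWord (· < · : α → α → Prop) u) ∧
      l.Chain' (fun u v => ¬ List.Lex (· < · : α → α → Prop) u v) ∧
      l.flatten = w := by
  have hfl : ∀ v : List α, (v.map (fun a => [a])).flatten = v := by
    intro v; induction v with
    | nil => rfl
    | cons a v ihv => simpa using ihv
  have hsing : ∀ u ∈ w.map (fun a => [a]), LyndonAux.L u := by
    intro u hu
    simp at hu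
    obtain ⟨a, _, rfl⟩ := hu
    exact LyndonAux.lyndon_singleton a
  obtain ⟨m, hm1, hm2, hm3⟩ := LyndonAux.exists_fac (w.map (fun a => [a])).length
    (w.map (fun a => [a])) rfl hsing
  refine ⟨m, ⟨hm1, hm2, hm3.trans (hfl w)⟩, ?_⟩
  intro y ⟨hy1, hy2, hy3⟩
  exact LyndonAux.uniq y m hy1 hy2 hm1 hm2 (hy3.trans (hm3.trans (hfl w)).symm)
end

section
/- Every permutation π of size at least 1 can be expressed as a direct sum π = π₁⊕⋯⊕πₙ of Lyndon permutations satisfying π₁ ≥_L π₂ ≥_L ⋯ ≥_L πₙ, and this ordered tuple (π₁, …, πₙ) is unique. -/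
open Equiv MeasureTheory

namespace CFL

/-- value function of a permutation-with-size, extended by the identity. -/
def pval (p : PermSig) (i : ℕ) : ℕ := if h : i < p.1 then (p.2 ⟨i, h⟩ : ℕ) else i

lemma pval_lt {p : PermSig} {i : ℕ} (h : i < p.1) : pval p i < p.1 := by
  simp only [pval, dif_pos h]; exact (p.2 ⟨i, h⟩).isLt

lemma pval_of_ge {p : PermSig} {i : ℕ} (h : p.1 ≤ i) : pval p i = i := by
  simp only [pval, dif_neg (not_lt.2 h)]

lemma pval_eq {n : ℕ} (π : Equiv.Perm (Fin n)) {i : ℕ} (h : i < n) :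
    pval ⟨n, π⟩ i = (π ⟨i, h⟩ : ℕ) := by
  simp only [pval, dif_pos h]

lemma permSig_ext {p q : PermSig} (h1 : p.1 = q.1) (h2 : ∀ i, pval p i = pval q i) :
    p = q := by
  obtain ⟨n, π⟩ := p
  obtain ⟨m, σ⟩ := q
  obtain rfl : n = m := h1
  congr 1
  ext i
  have := h2 i.1
  rw [pval_eq π i.2, pval_eq σ i.2] at this
  exact this

lemma pval_sigSum (p q : PermSig) (i : ℕ) :
    pval (sigSum p q) i = if i < p.1 then pval p i else p.1 + pval q (i - p.1) := by
  rcases lt_or_ge i p.1 with h | h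
  · rw [if_pos h]
    have h2 : i < p.1 + q.1 := lt_of_lt_of_le h (Nat.le_add_right _ _)
    rw [show (sigSum p q) = ⟨p.1 + q.1, permDirectSum p.2 q.2⟩ from rfl]
    rw [pval_eq _ h2, pval_eq _ h]
    have hs : finSumFinEquiv.symm (⟨i, h2⟩ : Fin (p.1 + q.1)) = Sum.inl ⟨i, h⟩ := by
      rw [show (⟨i, h2⟩ : Fin (p.1 + q.1)) = Fin.castAdd q.1 ⟨i, h⟩ from rfl]
      exact finSumFinEquiv_symm_apply_castAdd _
    simp [permDirectSum, Equiv.permCongr_apply, hs]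
  · rw [if_neg (not_lt.2 h)]
    rcases lt_or_ge i (p.1 + q.1) with h2 | h2
    · have hq : i - p.1 < q.1 := by omega
      rw [show (sigSum p q) = ⟨p.1 + q.1, permDirectSum p.2 q.2⟩ from rfl]
      rw [pval_eq _ h2, pval_eq _ hq]
      have hc : (⟨i, h2⟩ : Fin (p.1 + q.1)) = Fin.natAdd p.1 ⟨i - p.1, hq⟩ := by
        apply Fin.ext; simp; omega
      have hs : finSumFinEquiv.symm (⟨i, h2⟩ : Fin (p.1 + q.1)) = Sum.inr ⟨i - p.1, hq⟩ := by
        rw [hc]; exact finSumFinEquiv_symm_apply_natAdd _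
      simp [permDirectSum, Equiv.permCongr_apply, hs]
    · have : q.1 ≤ i - p.1 := by omega
      rw [pval_of_ge (p := sigSum p q) h2, pval_of_ge this]
      omega

lemma sigSum_fst (p q : PermSig) : (sigSum p q).1 = p.1 + q.1 := rfl

lemma sigSum_assoc (p q r : PermSig) : sigSum (sigSum p q) r = sigSum p (sigSum q r) := by
  apply permSig_ext
  · simp [sigSum_fst, Nat.add_assoc]
  · intro i
    simp only [pval_sigSum, sigSum_fst, Nat.sub_sub]
    split_ifs <;> omega

lemma sigSum_zero_left (q : PermSig) : sigSum ⟨0, 1⟩ q = q := by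
  apply permSig_ext
  · simp [sigSum_fst]
  · intro i
    rw [pval_sigSum]
    simp only [show ((⟨0, 1⟩ : PermSig)).1 = 0 from rfl]
    rw [if_neg (by omega)]
    simp

lemma sigSum_zero_right (p : PermSig) : sigSum p ⟨0, 1⟩ = p := by
  apply permSig_ext
  · simp [sigSum_fst]
  · intro i
    rw [pval_sigSum]
    rcases lt_or_ge i p.1 with h | h
    · rw [if_pos h]
    · rw [if_neg (not_lt.2 h), pval_of_ge (by simp : (⟨0,1⟩ : PermSig).1 ≤ i - p.1),
        pval_of_ge h]
      omega

lemma sigSumList_cons (p : PermSig) (l : List PermSig) :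
    sigSumList (p :: l) = sigSum p (sigSumList l) := by
  cases l with
  | nil => exact (sigSum_zero_right p).symm
  | cons q t => rfl

lemma sigSumList_append (l₁ l₂ : List PermSig) :
    sigSumList (l₁ ++ l₂) = sigSum (sigSumList l₁) (sigSumList l₂) := by
  induction l₁ with
  | nil => simp [sigSumList, sigSum_zero_left]
  | cons p t ih =>
      rw [List.cons_append, sigSumList_cons, ih, sigSumList_cons, sigSum_assoc]

end CFL


namespace CFL

lemma split_of_invariant {n : ℕ} (π : Equiv.Perm (Fin n)) (a : ℕ) (ha : 0 < a) (han : a ≤ n)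
    (hinv : ∀ i < a, pval ⟨n, π⟩ i < a) :
    ∃ (π₁ : Equiv.Perm (Fin a)) (π₂ : Equiv.Perm (Fin (n - a))),
      sigSum ⟨a, π₁⟩ ⟨n - a, π₂⟩ = ⟨n, π⟩ := by
  have hf : ∀ i : Fin a, ((π ⟨i.1, lt_of_lt_of_le i.2 han⟩ : Fin n) : ℕ) < a := by
    intro i
    have h := hinv i.1 i.2
    rwa [pval_eq π (lt_of_lt_of_le i.2 han)] at h
  set f : Fin a → Fin a := fun i => ⟨(π ⟨i.1, lt_of_lt_of_le i.2 han⟩ : ℕ), hf i⟩ with hfdef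
  have finj : Function.Injective f := by
    intro x y hxy
    have h1 := congrArg Fin.val hxy
    simp only [hfdef] at h1
    have h2 := π.injective (Fin.val_injective h1)
    injection h2 with h3
    exact Fin.ext h3
  have fbij := Finite.injective_iff_bijective.mp finj
  have key : ∀ j : ℕ, a ≤ j → ∀ hjn : j < n, a ≤ ((π ⟨j, hjn⟩ : Fin n) : ℕ) := by
    intro j hj hjn
    by_contra hlt
    push_neg at hlt
    obtain ⟨x, hx⟩ := fbij.2 ⟨_, hlt⟩
    have h1 := congrArg Fin.val hx
    simp only [hfdef] at h1
    have h2 := π.injective (Fin.val_injective h1)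
    injection h2 with h3
    omega
  have hg : ∀ j : Fin (n - a), ((π ⟨a + j.1, by omega⟩ : Fin n) : ℕ) - a < n - a := by
    intro j
    have h1 := (π ⟨a + j.1, by omega⟩ : Fin n).isLt
    have h2 := key (a + j.1) (by omega) (by omega)
    omega
  set g : Fin (n - a) → Fin (n - a) :=
    fun j => ⟨((π ⟨a + j.1, by omega⟩ : Fin n) : ℕ) - a, hg j⟩ with hgdef
  have ginj : Function.Injective g := by
    intro x y hxy
    have hx2 := key (a + x.1) (by omega) (by omega)
    have hy2 := key (a + y.1) (by omega) (by omega)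
    have h1 := congrArg Fin.val hxy
    simp only [hgdef] at h1
    have h1' : ((π ⟨a + x.1, by omega⟩ : Fin n) : ℕ) = ((π ⟨a + y.1, by omega⟩ : Fin n) : ℕ) := by
      omega
    have h2 := π.injective (Fin.val_injective h1')
    injection h2 with h3
    exact Fin.ext (by omega : x.1 = y.1)
  have gbij := Finite.injective_iff_bijective.mp ginj
  refine ⟨Equiv.ofBijective f fbij, Equiv.ofBijective g gbij, ?_⟩
  apply permSig_ext
  · simp [sigSum_fst]; omega
  · intro i
    rw [pval_sigSum]
    simp only [show ((⟨a, Equiv.ofBijective f fbij⟩ : PermSig)).1 = a from rfl]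
    rcases lt_or_ge i a with h | h
    · rw [if_pos h, pval_eq _ h, pval_eq π (lt_of_lt_of_le h han)]
      rfl
    · rw [if_neg (not_lt.2 h)]
      rcases lt_or_ge i n with h2 | h2
      · rw [pval_eq _ (show i - a < n - a by omega), pval_eq π h2]
        have he : (⟨a + (i - a), by omega⟩ : Fin n) = ⟨i, h2⟩ := Fin.ext (by simp; omega)
        have : (Equiv.ofBijective g gbij) ⟨i - a, by omega⟩ = g ⟨i - a, by omega⟩ := rfl
        rw [this]
        simp only [hgdef, he]
        have := key i h h2
        omega
      · rw [pval_of_ge (show (⟨n - a, Equiv.ofBijective g gbij⟩ : PermSig).1 ≤ i - a by simp; omega),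
          pval_of_ge (show (⟨n, π⟩ : PermSig).1 ≤ i from h2)]
        omega

end CFL

namespace CFL

lemma sigma_perm_eq {m n : ℕ} (h : m = n) (σ : Equiv.Perm (Fin m)) (π : Equiv.Perm (Fin n)) :
    (⟨m, σ⟩ : PermSig) = ⟨n, π⟩ ↔ π = Equiv.permCongr (finCongr h) σ := by
  subst h
  have h2 : Equiv.permCongr (finCongr (rfl : m = m)) σ = σ := by
    ext x
    simp [Equiv.permCongr_apply]
  rw [h2]
  constructor
  · intro h3
    injection h3 with h4 h5
    exact h5.symm
  · rintro rfl; rfl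

lemma isDecomposable_iff_invariant {n : ℕ} (π : Equiv.Perm (Fin n)) :
    IsDecomposable π ↔ ∃ a, 0 < a ∧ a < n ∧ ∀ i < a, pval ⟨n, π⟩ i < a := by
  constructor
  · rintro ⟨a, b, ha, hb, h, π₁, π₂, hπ⟩
    have hs : (⟨a + b, permDirectSum π₁ π₂⟩ : PermSig) = ⟨n, π⟩ :=
      (sigma_perm_eq h _ _).mpr hπ
    refine ⟨a, ha, by omega, fun i hi => ?_⟩
    rw [← hs]
    have : pval (sigSum ⟨a, π₁⟩ ⟨b, π₂⟩ : PermSig) i < a := by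
      rw [pval_sigSum, if_pos hi]
      exact pval_lt hi
    exact this
  · rintro ⟨a, ha, han, hinv⟩
    obtain ⟨π₁, π₂, hs⟩ := split_of_invariant π a ha (le_of_lt han) hinv
    have hab : a + (n - a) = n := by omega
    exact ⟨a, n - a, ha, by omega, hab, π₁, π₂, (sigma_perm_eq hab _ _).mp hs⟩

end CFL

namespace CFL

lemma blocks_exist : ∀ (n : ℕ) (π : Equiv.Perm (Fin n)), ∃ l : List Indec,
    sigSumList (l.map Subtype.val) = ⟨n, π⟩ := by
  intro n
  induction n using Nat.strong_induction_on with
  | _ n ih =>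
  intro π
  rcases Nat.eq_zero_or_pos n with rfl | hn
  · refine ⟨[], permSig_ext rfl fun i => ?_⟩
    rw [pval_of_ge (Nat.zero_le i), pval_of_ge (Nat.zero_le i)]
  · classical
    set P : ℕ → Prop := fun a => 0 < a ∧ ∀ i < a, pval ⟨n, π⟩ i < a with hP
    have hPn : P n := ⟨hn, fun i hi => by rw [pval_eq π hi]; exact (π _).isLt⟩
    have hex : ∃ a, P a := ⟨n, hPn⟩
    set a := Nat.find hex with hadef
    obtain ⟨ha0, hainv⟩ := Nat.find_spec hex
    have han : a ≤ n := Nat.find_min' hex hPn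
    obtain ⟨π₁, π₂, hs⟩ := split_of_invariant π a ha0 han hainv
    have hind : IsIndecomposable π₁ := by
      refine ⟨ha0, fun hdec => ?_⟩
      obtain ⟨a', ha'0, ha'a, hinv'⟩ := (isDecomposable_iff_invariant π₁).mp hdec
      have hPa' : P a' := by
        refine ⟨ha'0, fun i hi => ?_⟩
        rw [← hs, pval_sigSum, if_pos (show i < (⟨a, π₁⟩ : PermSig).1 by exact lt_trans hi ha'a)]
        exact hinv' i hi
      exact Nat.find_min hex ha'a hPa'
    obtain ⟨l₂, hl₂⟩ := ih (n - a) (by omega) π₂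
    refine ⟨⟨⟨a, π₁⟩, hind⟩ :: l₂, ?_⟩
    erw [List.map_cons, sigSumList_cons, hl₂]
    exact hs

lemma indec_size_pos (p : Indec) : 0 < p.1.1 := p.2.1

lemma sigSumList_map_fst_pos {l : List Indec} (hl : l ≠ []) :
    0 < (sigSumList (l.map Subtype.val)).1 := by
  cases l with
  | nil => exact absurd rfl hl
  | cons p t =>
    erw [List.map_cons, sigSumList_cons, sigSum_fst]
    have := indec_size_pos p
    omega

lemma head_size_le {p q : Indec} {S T : PermSig} (h : sigSum p.1 S = sigSum q.1 T) :
    p.1.1 ≤ q.1.1 := by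
  by_contra hlt
  push_neg at hlt
  have ha0 : 0 < q.1.1 := indec_size_pos q
  apply p.2.2
  apply (isDecomposable_iff_invariant p.1.2).mpr
  refine ⟨q.1.1, indec_size_pos q, hlt, fun i hi => ?_⟩
  have h1 : pval (sigSum p.1 S) i = pval p.1 i := by
    rw [pval_sigSum, if_pos (lt_trans hi hlt)]
  have h2 : pval (sigSum q.1 T) i = pval q.1 i := by rw [pval_sigSum, if_pos hi]
  have h3 : pval p.1 i < q.1.1 := by rw [← h1, h, h2]; exact pval_lt hi
  exact h3

lemma sigSum_inj {p q p' q' : PermSig} (h : sigSum p q = sigSum p' q') (hfst : p.1 = p'.1) :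
    p = p' ∧ q = q' := by
  have hsz : p.1 + q.1 = p'.1 + q'.1 := by rw [← sigSum_fst, ← sigSum_fst, h]
  have hq : q.1 = q'.1 := by omega
  have hv : ∀ i, pval (sigSum p q) i = pval (sigSum p' q') i := fun i => by rw [h]
  constructor
  · apply permSig_ext hfst
    intro i
    rcases lt_or_ge i p.1 with hi | hi
    · have h5 := hv i
      rwa [pval_sigSum, pval_sigSum, if_pos hi, if_pos (hfst ▸ hi)] at h5
    · rw [pval_of_ge hi, pval_of_ge (hfst ▸ hi)]
  · apply permSig_ext hq
    intro i
    rcases lt_or_ge i q.1 with hi | hi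
    · have h5 := hv (p.1 + i)
      rw [pval_sigSum, pval_sigSum, if_neg (by omega), if_neg (by omega),
        ← hfst, Nat.add_sub_cancel_left] at h5
      omega
    · rw [pval_of_ge hi, pval_of_ge (hq ▸ hi)]

lemma blocks_unique : ∀ l₁ l₂ : List Indec,
    sigSumList (l₁.map Subtype.val) = sigSumList (l₂.map Subtype.val) → l₁ = l₂ := by
  intro l₁
  induction l₁ with
  | nil =>
    intro l₂ h
    cases l₂ with
    | nil => rfl
    | cons q t =>
      exfalso
      have h2 := sigSumList_map_fst_pos (l := q :: t) (by simp)
      rw [← h] at h2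
      exact absurd h2 (lt_irrefl 0)
  | cons p t ih =>
    intro l₂ h
    cases l₂ with
    | nil =>
      exfalso
      have h2 := sigSumList_map_fst_pos (l := p :: t) (by simp)
      rw [h] at h2
      exact absurd h2 (lt_irrefl 0)
    | cons q s =>
      erw [List.map_cons, List.map_cons, sigSumList_cons, sigSumList_cons] at h
      have hsz : p.1.1 = q.1.1 := le_antisymm (head_size_le h) (head_size_le h.symm)
      obtain ⟨h1, h2⟩ := sigSum_inj h hsz
      have hpq : p = q := Subtype.ext h1
      subst hpq
      rw [ih s h2]

noncomputable def blocksOf (p : PermSig) : List Indec := (blocks_exist p.1 p.2).choose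

lemma blocksOf_spec (p : PermSig) : sigSumList ((blocksOf p).map Subtype.val) = p :=
  (blocks_exist p.1 p.2).choose_spec

lemma isBlockDecomposition_unique {n : ℕ} {π : Equiv.Perm (Fin n)} {l : List Indec}
    (h : IsBlockDecomposition π l) : l = blocksOf ⟨n, π⟩ :=
  blocks_unique _ _ (h.trans (blocksOf_spec ⟨n, π⟩).symm)

end CFL


namespace CFL

variable {α : Type*} (r : α → α → Prop) [IsStrictTotalOrder α r]

lemma lex_trans {u v w : List α} (h1 : List.Lex r u v) (h2 : List.Lex r v w) :
    List.Lex r u w := List.lex_trans (fun a b => trans_of r a b) h1 h2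

lemma lex_irrefl (u : List α) : ¬ List.Lex r u u := irrefl_of (List.Lex r) u

lemma lex_asymm {u v : List α} (h1 : List.Lex r u v) (h2 : List.Lex r v u) : False :=
  lex_irrefl r u (lex_trans r h1 h2)

lemma not_lex_of_prefix : ∀ {u v : List α}, u <+: v → ¬ List.Lex r v u := by
  intro u
  induction u with
  | nil => intro v _ hl; exact List.not_lex_nil hl
  | cons a u ih =>
    intro v hpre hl
    cases v with
    | nil => exact List.cons_ne_nil a u (List.prefix_nil.mp hpre)
    | cons b v =>
      obtain ⟨rfl, hp⟩ := List.cons_prefix_cons.mp hpre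
      rw [List.lex_cons_iff] at hl
      exact ih hp hl

lemma lex_of_prefix {u v : List α} (hp : u <+: v) (hne : u ≠ v) : List.Lex r u v := by
  rcases trichotomous_of (List.Lex r) u v with h | h | h
  · exact h
  · exact absurd h hne
  · exact absurd h (not_lex_of_prefix r hp)

lemma lex_append_left_iff (u : List α) {x y : List α} :
    List.Lex r (u ++ x) (u ++ y) ↔ List.Lex r x y := by
  induction u with
  | nil => simp
  | cons a u ih => rw [List.cons_append, List.cons_append, List.lex_cons_iff, ih]

lemma lex_append_of_not_prefix : ∀ {u v : List α}, List.Lex r u v → ¬ u <+: v →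
    ∀ w w' : List α, List.Lex r (u ++ w) (v ++ w') := by
  intro u
  induction u with
  | nil => intro v _ hnp _ _; exact absurd (List.nil_prefix) hnp
  | cons a u ih =>
    intro v hlex hnp w w'
    cases v with
    | nil => exact absurd hlex List.not_lex_nil
    | cons b v =>
      cases hlex with
      | rel h => exact List.Lex.rel h
      | cons h =>
        have hnp' : ¬ u <+: v := fun hp => hnp (List.cons_prefix_cons.mpr ⟨rfl, hp⟩)
        exact List.Lex.cons (ih h hnp' w w')

lemma lyndon_lt_drop {w : List α} (hw : IsLyndonWord r w) {i : ℕ} (hi0 : 0 < i)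
    (hilen : i < w.length) : List.Lex r w (w.drop i) := by
  rcases trichotomous_of (List.Lex r) w (w.drop i) with h | h | h
  · exact h
  · exfalso
    have := congrArg List.length h
    rw [List.length_drop] at this
    omega
  · exact absurd h (hw.2 i hi0 hilen)

lemma lyndon_singleton (a : α) : IsLyndonWord r [a] :=
  ⟨by simp, fun i h1 h2 => by simp at h2; omega⟩

lemma append_lyndon_lt {u v : List α} (hv : IsLyndonWord r v) (hlex : List.Lex r u v)
    (hu : u ≠ []) : List.Lex r (u ++ v) v := by
  by_cases hp : u <+: v
  · obtain ⟨t, rfl⟩ := hp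
    have ht : t ≠ [] := by
      rintro rfl
      rw [List.append_nil] at hlex
      exact lex_irrefl r u hlex
    rw [lex_append_left_iff]
    have hdrop : t = (u ++ t).drop u.length := by rw [List.drop_left]
    have h0 : 0 < u.length := List.length_pos_iff.mpr hu
    have h1 : u.length < (u ++ t).length := by
      rw [List.length_append]
      have := List.length_pos_iff.mpr ht
      omega
    have h2 := lyndon_lt_drop r hv h0 h1
    rwa [← hdrop] at h2
  · have h2 := lex_append_of_not_prefix r hlex hp v []
    rwa [List.append_nil] at h2

lemma lyndon_append {u v : List α} (hu : IsLyndonWord r u) (hv : IsLyndonWord r v)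
    (hlex : List.Lex r u v) : IsLyndonWord r (u ++ v) := by
  constructor
  · intro h
    exact hu.1 (List.append_eq_nil_iff.mp h).1
  · intro i hi0 hilen
    rw [List.drop_append]
    rcases lt_trichotomy i u.length with hc | hc | hc
    · have hz : i - u.length = 0 := by omega
      rw [hz, List.drop_zero]
      have hl1 : List.Lex r u (u.drop i) := lyndon_lt_drop r hu hi0 hc
      have hnp : ¬ u <+: u.drop i := fun hp => by
        have := hp.length_le
        rw [List.length_drop] at this
        omega
      exact fun hcon => lex_asymm r (lex_append_of_not_prefix r hl1 hnp v v) hcon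
    · subst hc
      rw [List.drop_length, Nat.sub_self, List.drop_zero, List.nil_append]
      exact fun hcon => lex_asymm r (append_lyndon_lt r hv hlex hu.1) hcon
    · rw [List.drop_eq_nil_of_le (le_of_lt hc), List.nil_append]
      have hj0 : 0 < i - u.length := by omega
      have hjlen : i - u.length < v.length := by
        rw [List.length_append] at hilen
        omega
      have h1 : List.Lex r v (v.drop (i - u.length)) := lyndon_lt_drop r hv hj0 hjlen
      have h2 : List.Lex r (u ++ v) v := append_lyndon_lt r hv hlex hu.1
      exact fun hcon => lex_asymm r (lex_trans r h2 h1) hcon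

end CFL

namespace CFL

variable {α : Type*} (r : α → α → Prop) [IsStrictTotalOrder α r]

/-- `a ≥ b` for words in lexicographic order. -/
def wGe (a b : List α) : Prop := b = a ∨ List.Lex r b a

lemma wGe_trans {a b c : List α} (h1 : wGe r a b) (h2 : wGe r b c) : wGe r a c := by
  rcases h1 with rfl | h1
  · exact h2
  · rcases h2 with rfl | h2
    · exact Or.inr h1
    · exact Or.inr (lex_trans r h2 h1)

omit [IsStrictTotalOrder α r] in
lemma exists_split_of_not_chain' {β : Type*} {R : β → β → Prop} :
    ∀ {l : List β}, ¬ l.Chain' R → ∃ l₁ a b l₂, l = l₁ ++ a :: b :: l₂ ∧ ¬ R a b := by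
  intro l
  induction l with
  | nil => intro h; exact absurd List.isChain_nil h
  | cons a t ih =>
    intro h
    cases t with
    | nil => exact absurd (List.isChain_singleton a) h
    | cons b t' =>
      by_cases hR : R a b
      · have h2 : ¬ (b :: t').Chain' R := fun hc => h (List.isChain_cons_cons.mpr ⟨hR, hc⟩)
        obtain ⟨l₁, x, y, l₂, heq, hxy⟩ := ih h2
        exact ⟨a :: l₁, x, y, l₂, by rw [heq]; rfl, hxy⟩
      · exact ⟨[], a, b, t', rfl, hR⟩

lemma cfl_exists_aux : ∀ (N : ℕ) (F : List (List α)), F.length ≤ N →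
    (∀ g ∈ F, IsLyndonWord r g) → ∃ G : List (List α),
      (∀ g ∈ G, IsLyndonWord r g) ∧ G.Chain' (wGe r) ∧ G.flatten = F.flatten := by
  intro N
  induction N with
  | zero =>
    intro F hF _
    have : F = [] := List.length_eq_zero_iff.mp (Nat.le_zero.mp hF)
    subst this
    exact ⟨[], by simp, List.isChain_nil, rfl⟩
  | succ N ih =>
    intro F hF hly
    by_cases hc : F.Chain' (wGe r)
    · exact ⟨F, hly, hc, rfl⟩
    · obtain ⟨l₁, a, b, l₂, heq, hab⟩ := exists_split_of_not_chain' hc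
      have hlex : List.Lex r a b := by
        rcases trichotomous_of (List.Lex r) a b with h | h | h
        · exact h
        · exact absurd (Or.inl h.symm) hab
        · exact absurd (Or.inr h) hab
      have ha : IsLyndonWord r a := hly a (by rw [heq]; simp)
      have hb : IsLyndonWord r b := hly b (by rw [heq]; simp)
      have hlen : (l₁ ++ (a ++ b) :: l₂).length ≤ N := by
        have h2 : F.length = l₁.length + l₂.length + 2 := by rw [heq]; simp; omega
        simp only [List.length_append, List.length_cons]
        omega
      have hly' : ∀ g ∈ l₁ ++ (a ++ b) :: l₂, IsLyndonWord r g := by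
        intro g hg
        rcases List.mem_append.mp hg with h | h
        · exact hly g (by rw [heq]; exact List.mem_append.mpr (Or.inl h))
        · rcases List.mem_cons.mp h with rfl | h
          · exact lyndon_append r ha hb hlex
          · exact hly g (by rw [heq]; simp [h])
      obtain ⟨G, hG1, hG2, hG3⟩ := ih (l₁ ++ (a ++ b) :: l₂) hlen hly'
      refine ⟨G, hG1, hG2, ?_⟩
      rw [hG3, heq]
      simp [List.append_assoc]

lemma wGe_head {v : List α} {G : List (List α)} (h : List.Chain' (wGe r) (v :: G)) :
    ∀ g ∈ G, wGe r v g := by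
  haveI : IsTrans (List α) (wGe r) := ⟨fun a b c => wGe_trans r⟩
  have h2 := List.isChain_iff_pairwise.mp h
  exact fun g hg => (List.pairwise_cons.mp h2).1 g hg

lemma prefix_flatten_suffix_le {v : List α} : ∀ (G : List (List α)) (t : List α),
    (∀ g ∈ G, wGe r v g) → t ≠ [] → t <+: G.flatten →
    ∃ w : List α, w ≠ [] ∧ w <:+ t ∧ wGe r v w := by
  intro G
  induction G with
  | nil =>
    intro t _ htne hp
    rw [List.flatten_nil] at hp
    exact absurd (List.prefix_nil.mp hp) htne
  | cons m G ih =>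
    intro t hge htne hp
    rw [List.flatten_cons] at hp
    rcases le_or_gt t.length m.length with hlen | hlen
    · have hpm : t <+: m := List.prefix_of_prefix_length_le hp (List.prefix_append m _) hlen
      refine ⟨t, htne, List.suffix_refl t, ?_⟩
      have hm := hge m (by simp)
      by_cases he : t = m
      · rw [he]; exact hm
      · have hl := lex_of_prefix r hpm he
        rcases hm with rfl | hm
        · exact Or.inr hl
        · exact Or.inr (lex_trans r hl hm)
    · have hmp : m <+: t := List.prefix_of_prefix_length_le (List.prefix_append m _) hp
        (le_of_lt hlen)
      obtain ⟨t₁, rfl⟩ := hmp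
      have ht₁ : t₁ ≠ [] := by
        rintro rfl
        rw [List.append_nil] at hlen
        omega
      have hp₁ : t₁ <+: G.flatten := (List.prefix_append_right_inj m).mp hp
      obtain ⟨w, hw1, hw2, hw3⟩ := ih t₁ (fun g hg => hge g (by simp [hg])) ht₁ hp₁
      exact ⟨w, hw1, hw2.trans (List.suffix_append m t₁), hw3⟩

lemma cfl_not_lt {u v : List α} {F G : List (List α)}
    (hu : IsLyndonWord r u) (hvne : v ≠ [])
    (hchain : List.Chain' (wGe r) (v :: G))
    (heq : u ++ F.flatten = v ++ G.flatten) : ¬ v.length < u.length := by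
  intro hlen
  have hvu : v <+: u := by
    have h1 : v <+: v ++ G.flatten := List.prefix_append v _
    rw [← heq] at h1
    exact List.prefix_of_prefix_length_le h1 (List.prefix_append u _) (le_of_lt hlen)
  obtain ⟨t, rfl⟩ := hvu
  have ht : t ≠ [] := by
    rintro rfl
    rw [List.append_nil] at hlen
    omega
  have htp : t <+: G.flatten := by
    rw [List.append_assoc] at heq
    exact ⟨F.flatten, List.append_cancel_left heq⟩
  obtain ⟨w, hw1, hw2, hw3⟩ := prefix_flatten_suffix_le r G t (wGe_head r hchain) ht htp
  obtain ⟨pre, rfl⟩ := hw2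
  have hassoc : v ++ (pre ++ w) = (v ++ pre) ++ w := (List.append_assoc v pre w).symm
  have hdrop : (v ++ (pre ++ w)).drop (v.length + pre.length) = w := by
    rw [hassoc, ← List.length_append, List.drop_left]
  have h0 : 0 < v.length + pre.length := by
    have := List.length_pos_iff.mpr hvne
    omega
  have hi : v.length + pre.length < (v ++ (pre ++ w)).length := by
    have := List.length_pos_iff.mpr hw1
    simp only [List.length_append]
    omega
  have hnlex := hu.2 (v.length + pre.length) h0 hi
  rw [hdrop] at hnlex
  have hvltu : List.Lex r v (v ++ (pre ++ w)) := by
    apply lex_of_prefix r (List.prefix_append v _)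
    intro hveq
    have := congrArg List.length hveq
    simp only [List.length_append] at this
    have := List.length_pos_iff.mpr hw1
    omega
  rcases hw3 with rfl | hwlex
  · exact hnlex hvltu
  · exact hnlex (lex_trans r hwlex hvltu)

lemma cfl_unique : ∀ (F G : List (List α)),
    (∀ g ∈ F, IsLyndonWord r g) → (∀ g ∈ G, IsLyndonWord r g) →
    F.Chain' (wGe r) → G.Chain' (wGe r) → F.flatten = G.flatten → F = G := by
  intro F
  induction F with
  | nil =>
    intro G _ hGly _ _ h
    cases G with
    | nil => rfl
    | cons v G =>
      exfalso
      rw [List.flatten_nil, List.flatten_cons] at h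
      exact (hGly v (by simp)).1 (List.append_eq_nil_iff.mp h.symm).1
  | cons u F ih =>
    intro G hFly hGly hFc hGc h
    cases G with
    | nil =>
      exfalso
      rw [List.flatten_nil, List.flatten_cons] at h
      exact (hFly u (by simp)).1 (List.append_eq_nil_iff.mp h).1
    | cons v G =>
      rw [List.flatten_cons, List.flatten_cons] at h
      have hu := hFly u (by simp)
      have hv := hGly v (by simp)
      have hlen : u.length = v.length := by
        rcases lt_trichotomy u.length v.length with hc | hc | hc
        · exact absurd hc (cfl_not_lt r hv hu.1 hFc h.symm)
        · exact hc
        · exact absurd hc (cfl_not_lt r hu hv.1 hGc h)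
      have huv : u = v := by
        have h1 : u <+: u ++ F.flatten := List.prefix_append u _
        have h2 : v <+: u ++ F.flatten := by rw [h]; exact List.prefix_append v _
        exact (List.prefix_of_prefix_length_le h1 h2 (le_of_eq hlen)).eq_of_length hlen
      subst huv
      have h2 : F.flatten = G.flatten := List.append_cancel_left h
      rw [ih G (fun g hg => hFly g (by simp [hg])) (fun g hg => hGly g (by simp [hg]))
        hFc.tail hGc.tail h2]

end CFL


namespace CFL

lemma permWord_injective {n : ℕ} {π σ : Equiv.Perm (Fin n)} (h : permWord π = permWord σ) :
    π = σ := by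
  have h2 : List.ofFn (fun i : Fin n => ((π i : Fin n) : ℕ))
      = List.ofFn (fun i : Fin n => ((σ i : Fin n) : ℕ)) := by
    rw [List.ofFn_eq_map, List.ofFn_eq_map]
    exact h
  have h3 := List.ofFn_inj.mp h2
  apply Equiv.ext
  intro i
  exact Fin.ext (congrFun h3 i)

lemma listNat_trichotomous (a b : List ℕ) :
    List.Lex (· < ·) a b ∨ a = b ∨ List.Lex (· < ·) b a :=
  trichotomous_of (List.Lex (· < ·)) a b

lemma indecLt_def (p q : Indec) : indecLt p q ↔
    (p.1.1 < q.1.1 ∨ (p.1.1 = q.1.1 ∧ List.Lex (· < ·) (permWord p.1.2) (permWord q.1.2))) :=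
  Iff.rfl

instance : IsStrictTotalOrder Indec indecLt where
  irrefl p h := by
    rcases (indecLt_def p p).mp h with h' | ⟨-, h'⟩
    · exact lt_irrefl _ h'
    · exact Std.Asymm.asymm _ _ h' h'
  trans p q s h1 h2 := by
    rw [indecLt_def] at h1 h2 ⊢
    rcases h1 with h1 | ⟨h1, h1'⟩ <;> rcases h2 with h2 | ⟨h2, h2'⟩
    · exact Or.inl (lt_trans h1 h2)
    · exact Or.inl (h2 ▸ h1)
    · exact Or.inl (h1 ▸ h2)
    · exact Or.inr ⟨h1.trans h2, List.lex_trans (fun a b => lt_trans a b) h1' h2'⟩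
  trichotomous p q hpq hqp := by
    have htri : indecLt p q ∨ p = q ∨ indecLt q p := by
      rw [indecLt_def p q, indecLt_def q p]
      rcases lt_trichotomy p.1.1 q.1.1 with hc | hc | hc
      · exact Or.inl (Or.inl hc)
      · rcases listNat_trichotomous (permWord p.1.2) (permWord q.1.2) with h | h | h
        · exact Or.inl (Or.inr ⟨hc, h⟩)
        · refine Or.inr (Or.inl ?_)
          apply Subtype.ext
          obtain ⟨⟨n, π⟩, hp⟩ := p
          obtain ⟨⟨m, σ⟩, hq⟩ := q
          simp only at hc h
          subst hc
          have hps := permWord_injective h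
          subst hps
          rfl
        · exact Or.inr (Or.inr (Or.inr ⟨hc.symm, h⟩))
      · exact Or.inr (Or.inr (Or.inl hc))
    rcases htri with h | h | h
    · exact absurd h hpq
    · exact h
    · exact absurd h hqp

lemma flatten_map_singleton {β : Type*} (w : List β) :
    (List.map (fun a => [a]) w).flatten = w := by
  induction w with
  | nil => rfl
  | cons a t ih => simp [ih]

lemma sigSumList_map_flatten (G : List (List Indec)) :
    sigSumList (G.map fun g => sigSumList (g.map Subtype.val))
      = sigSumList (G.flatten.map Subtype.val) := by
  induction G with
  | nil => rfl
  | cons g G ih =>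
    erw [List.map_cons, sigSumList_cons, List.flatten_cons, List.map_append, sigSumList_append, ih]

end CFL

/-- Every permutation of size at least `1` is uniquely a direct sum
`π₁ ⊕ ⋯ ⊕ πₙ` of Lyndon permutations with `π₁ ≥_L π₂ ≥_L ⋯ ≥_L πₙ`. -/
theorem lyndon_factorization_of_permutation (N : ℕ) (hN : 1 ≤ N)
    (π : Equiv.Perm (Fin N)) :
    ∃! L : List PermSig,
      (∀ p ∈ L, IsLyndonPerm p.2) ∧
      L.Chain' (fun p q => permLeL q p) ∧
      sigSumList L = ⟨N, π⟩ := by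
  classical
  have hwspec := CFL.blocksOf_spec ⟨N, π⟩
  set w : List Indec := CFL.blocksOf ⟨N, π⟩ with hw
  have hsing : ∀ g ∈ w.map (fun a => [a]), IsLyndonWord indecLt g := by
    intro g hg
    obtain ⟨a, -, rfl⟩ := List.mem_map.mp hg
    exact CFL.lyndon_singleton _ a
  obtain ⟨G, hG1, hG2, hG3⟩ :=
    CFL.cfl_exists_aux indecLt (w.map fun a => [a]).length _ le_rfl hsing
  have hflat : G.flatten = w := by
    rw [hG3, CFL.flatten_map_singleton]
  refine ⟨G.map (fun g => sigSumList (g.map Subtype.val)), ⟨?_, ?_, ?_⟩, ?_⟩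
  · intro p hp
    obtain ⟨g, hgG, rfl⟩ := List.mem_map.mp hp
    exact ⟨g, rfl, hG1 g hgG⟩
  · show List.IsChain _ _; rw [List.isChain_map]
    apply hG2.imp
    intro a b hab
    exact ⟨b, a, rfl, rfl, hab⟩
  · rw [CFL.sigSumList_map_flatten, hflat, hwspec]
  · rintro L' ⟨hL1, hL2, hL3⟩
    set G' := L'.map CFL.blocksOf with hG'
    have hL'eq : G'.map (fun g => sigSumList (g.map Subtype.val)) = L' := by
      rw [hG', List.map_map]
      conv_rhs => rw [← List.map_id L']
      apply List.map_congr_left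
      intro p hp
      exact CFL.blocksOf_spec p
    have hG'1 : ∀ g ∈ G', IsLyndonWord indecLt g := by
      intro g hg
      obtain ⟨p, hpL, rfl⟩ := List.mem_map.mp hg
      obtain ⟨l, hbd, hly⟩ := hL1 p hpL
      have he : l = CFL.blocksOf p := CFL.isBlockDecomposition_unique hbd
      rwa [← he]
    have hG'2 : G'.Chain' (CFL.wGe indecLt) := by
      rw [hG']; show List.IsChain _ _; rw [List.isChain_map]
      apply hL2.imp
      intro a b hab
      obtain ⟨lp, lq, hbp, hbq, hor⟩ := hab
      have e1 : lp = CFL.blocksOf b := CFL.isBlockDecomposition_unique hbp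
      have e2 : lq = CFL.blocksOf a := CFL.isBlockDecomposition_unique hbq
      rwa [e1, e2] at hor
    have hG'flat : G'.flatten = w := by
      apply CFL.blocks_unique
      rw [← CFL.sigSumList_map_flatten, hL'eq, hL3, hwspec]
    have hGG : G' = G :=
      CFL.cfl_unique indecLt G' G hG'1 hG1 hG'2 hG2 (by rw [hG'flat, hflat])
    rw [← hL'eq, hGG]
end
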